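/- Let L₂ = {aᵐ·bⁿ·a² : m ≥ 3, n ≥ 1} over the alphabet {a, b}. Then the syntactic class of the one-letter word a with respect to L₂ is the singleton {a}: every nonempty word w over {a, b} that is syntactically equivalent to a with respect to L₂ equals a. -/

import Mathlib

/-- The two-letter alphabet `{a, b}`. -/
inductive AB : Type
  | a : AB
  | b : AB

/-- Words over `{a, b}`, as elements of the free monoid (the empty word is `1`). -/
abbrev Word : Type := FreeMonoid AB

/-- The letter `a` as a word. -/
def wa : Word := FreeMonoid.of AB.a

/-- The letter `b` as a word. -/
def wb : Word := FreeMonoid.of AB.b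

/-- Syntactic equivalence of `u` and `v` with respect to the language `L`:
for all (possibly empty) words `p, q`, `p·u·q ∈ L ↔ p·v·q ∈ L`. -/
def SynEq (L : Set Word) (u v : Word) : Prop :=
  ∀ p q : Word, p * u * q ∈ L ↔ p * v * q ∈ L

/-- The language `L₂ = a²a⁺b⁺a² = {aᵐ·bⁿ·a² : m ≥ 3, n ≥ 1}`. -/
def L2 : Set Word :=
  {w | ∃ m n : ℕ, 3 ≤ m ∧ 1 ≤ n ∧ w = wa ^ m * wb ^ n * wa ^ 2}

lemma toList_pow_of (x : AB) (n : ℕ) :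
    FreeMonoid.toList ((FreeMonoid.of x) ^ n) = List.replicate n x := by
  induction n with
  | zero => rfl
  | succ k ih => rw [pow_succ, FreeMonoid.toList_mul, ih, FreeMonoid.toList_of,
      ← List.replicate_succ']

lemma rep_cons_eq : ∀ p q : ℕ, ∀ t s : List AB,
    List.replicate p AB.a ++ AB.b :: t = List.replicate q AB.a ++ AB.b :: s →
    p = q ∧ t = s := by
  intro p
  induction p with
  | zero =>
    intro q t s h
    cases q with
    | zero => simpa using h
    | succ q => simp [List.replicate_succ] at h
  | succ p ih =>
    intro q t s h
    cases q with
    | zero => simp [List.replicate_succ] at h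
    | succ q =>
      simp only [List.replicate_succ, List.cons_append, List.cons.injEq] at h
      obtain ⟨hp, ht⟩ := ih q t s h.2
      exact ⟨by omega, ht⟩

/-- the syntactic class of the letter `a` with respect to `L₂` is the
singleton `{a}`: a nonempty word `w` is syntactically equivalent to `a` iff `w = a`. -/
theorem synClass_of_a_is_singleton (w : Word) (hw : w ≠ 1) :
    SynEq L2 w wa ↔ w = wa := by
  constructor
  · intro h
    -- context 1 : p = a², q = b·a²
    have mem1 : wa ^ 2 * wa * (wb * wa ^ 2) ∈ L2 := by
      refine ⟨3, 1, le_refl 3, le_refl 1, ?_⟩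
      rw [pow_one, ← pow_succ, mul_assoc]
    have h1 : wa ^ 2 * w * (wb * wa ^ 2) ∈ L2 := (h (wa ^ 2) (wb * wa ^ 2)).mpr mem1
    obtain ⟨m, n, hm, hn, heq⟩ := h1
    have hl := congrArg FreeMonoid.toList heq
    simp only [FreeMonoid.toList_mul, toList_pow_of, wa, wb, FreeMonoid.toList_of] at hl
    -- hl : replicate 2 a ++ w.toList ++ ([b] ++ replicate 2 a)
    --      = replicate m a ++ (replicate n b ++ replicate 2 a)
    obtain ⟨n', rfl⟩ : ∃ n', n = n' + 1 := ⟨n - 1, by omega⟩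
    obtain ⟨m', rfl⟩ : ∃ m', m = m' + 1 + 2 := ⟨m - 3, by omega⟩
    rw [List.replicate_succ' (n := n') (a := AB.b)] at hl
    have hl' : List.replicate 2 AB.a ++ (FreeMonoid.toList w ++ [AB.b]) =
        List.replicate (m' + 1 + 2) AB.a ++ (List.replicate n' AB.b ++ [AB.b]) := by
      apply List.append_inj_left' (by simpa [List.append_assoc] using hl)
      simp
    rw [show m' + 1 + 2 = 2 + (m' + 1) by omega, List.replicate_add, List.append_assoc] at hl'
    have hw1 : FreeMonoid.toList w ++ [AB.b] =
        List.replicate (m' + 1) AB.a ++ (List.replicate n' AB.b ++ [AB.b]) :=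
      List.append_cancel_left hl'
    have hw2 : FreeMonoid.toList w = List.replicate (m' + 1) AB.a ++ List.replicate n' AB.b :=
      List.append_cancel_right (bs := [AB.b]) (by rw [List.append_assoc]; exact hw1)
    -- context 2 : p = a³·b, q = a
    have mem2 : wa ^ 3 * wb * wa * wa ∈ L2 := by
      refine ⟨3, 1, le_refl 3, le_refl 1, ?_⟩
      rw [pow_one, mul_assoc, show wa * wa = wa ^ 2 by rw [sq]]
    have h2 : wa ^ 3 * wb * w * wa ∈ L2 := by
      have := (h (wa ^ 3 * wb) wa).mpr
      simpa [mul_assoc] using this (by simpa [mul_assoc] using mem2)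
    obtain ⟨p, q, hp, hq, heq2⟩ := h2
    have hl2 := congrArg FreeMonoid.toList heq2
    simp only [FreeMonoid.toList_mul, toList_pow_of, wa, wb, FreeMonoid.toList_of, hw2] at hl2
    obtain ⟨q', rfl⟩ : ∃ q', q = q' + 1 := ⟨q - 1, by omega⟩
    -- rewrite RHS as replicate p a ++ b :: (replicate q' b ++ [a,a])
    have hl3 : List.replicate 3 AB.a ++ AB.b ::
        (List.replicate (m' + 1) AB.a ++ List.replicate n' AB.b ++ [AB.a]) =
        List.replicate p AB.a ++ AB.b :: (List.replicate q' AB.b ++ [AB.a, AB.a]) := by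
      simpa [List.replicate_succ, List.append_assoc, show (2:ℕ) = 1 + 1 by rfl] using hl2
    obtain ⟨hp3, htail⟩ := rep_cons_eq 3 p _ _ hl3
    -- htail : replicate (m'+1) a ++ replicate n' b ++ [a] = replicate q' b ++ [a,a]
    cases q' with
    | succ q'' =>
      rw [List.replicate_succ] at htail
      simp [List.replicate_succ] at htail
    | zero =>
      simp only [List.replicate, List.nil_append] at htail
      have hlen := congrArg List.length htail
      simp at hlen
      obtain rfl : m' = 0 := by omega
      obtain rfl : n' = 0 := by omega
      have : FreeMonoid.toList w = FreeMonoid.toList wa := by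
        simp [hw2, wa, FreeMonoid.toList_of]
      exact FreeMonoid.toList.injective this
  · rintro rfl
    intro p q
    rfl
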